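/- arXiv:2408.13276 — 3 statements merged into one kernel-verified Lean document; each statement's English description precedes it below -/
import Mathlib

section
/- Let A: S^d → R^m be a linear operator on symmetric d×d matrices with restricted isometry constant δ_{r+r'}, meaning (1−δ_{r+r'})‖Z‖_F² ≤ ‖A(Z)‖_2² ≤ (1+δ_{r+r'})‖Z‖_F² for all symmetric Z of rank at most r+r'. Then for all symmetric matrices Z₁ of rank at most r and Z₂ of rank at most r', one has |⟨(I − A*A)(Z₁), Z₂⟩| ≤ δ_{r+r'} ‖Z₁‖_F ‖Z₂‖_F, where A* is the adjoint of A with respect to the trace inner product. -/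
open scoped BigOperators
open Matrix

noncomputable def frobNorm {d₁ d₂ : ℕ} (A : Matrix (Fin d₁) (Fin d₂) ℝ) : ℝ :=
  Real.sqrt (∑ i, ∑ j, A i j ^ 2)

noncomputable def vecNorm {m : ℕ} (y : Fin m → ℝ) : ℝ :=
  Real.sqrt (∑ i, y i ^ 2)

noncomputable def specNorm {d₁ d₂ : ℕ} (A : Matrix (Fin d₁) (Fin d₂) ℝ) : ℝ :=
  ‖LinearMap.toContinuousLinearMap (Matrix.toEuclideanLin A)‖

noncomputable def tinner {d : ℕ} (A B : Matrix (Fin d) (Fin d) ℝ) : ℝ :=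
  (A * Bᵀ).trace

noncomputable def sigmaMin {d₁ d₂ : ℕ} (A : Matrix (Fin d₁) (Fin d₂) ℝ) : ℝ :=
  sInf {s : ℝ | 0 < s ∧ ∃ i, s ^ 2 = (Matrix.isHermitian_conjTranspose_mul_self A).eigenvalues i}

noncomputable def projPerp {d : ℕ} (w : Fin d → ℝ) (Z : Matrix (Fin d) (Fin d) ℝ) :
    Matrix (Fin d) (Fin d) ℝ :=
  Z - tinner (Matrix.vecMulVec w w) Z • Matrix.vecMulVec w w

lemma tinner_eq {d : ℕ} (A B : Matrix (Fin d) (Fin d) ℝ) :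
    tinner A B = ∑ i, ∑ j, A i j * B i j := by
  simp [tinner, Matrix.trace, Matrix.mul_apply, Matrix.diag]

lemma frob_sq {d : ℕ} (A : Matrix (Fin d) (Fin d) ℝ) :
    frobNorm A ^ 2 = ∑ i, ∑ j, A i j ^ 2 := by
  apply Real.sq_sqrt
  exact Finset.sum_nonneg fun i _ => Finset.sum_nonneg fun j _ => sq_nonneg _

lemma frob_nonneg {d : ℕ} (A : Matrix (Fin d) (Fin d) ℝ) : 0 ≤ frobNorm A :=
  Real.sqrt_nonneg _

lemma frob_eq_zero {d : ℕ} {A : Matrix (Fin d) (Fin d) ℝ} (h : frobNorm A = 0) :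
    A = 0 := by
  have h2 : frobNorm A ^ 2 = 0 := by rw [h]; ring
  rw [frob_sq] at h2
  ext i j
  have := (Finset.sum_eq_zero_iff_of_nonneg
    (fun i _ => Finset.sum_nonneg fun j _ => sq_nonneg (A i j))).1 h2 i (Finset.mem_univ i)
  have := (Finset.sum_eq_zero_iff_of_nonneg
    (fun j _ => sq_nonneg (A i j))).1 this j (Finset.mem_univ j)
  simpa using pow_eq_zero_iff (n := 2) (by norm_num) |>.1 this

lemma rank_add_le' {d : ℕ} (A B : Matrix (Fin d) (Fin d) ℝ) :
    (A + B).rank ≤ A.rank + B.rank := by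
  unfold Matrix.rank
  have h : LinearMap.range (A + B).mulVecLin ≤
      LinearMap.range A.mulVecLin ⊔ LinearMap.range B.mulVecLin := by
    rintro x ⟨v, rfl⟩
    exact Submodule.mem_sup.2 ⟨A.mulVecLin v, ⟨v, rfl⟩, B.mulVecLin v, ⟨v, rfl⟩, by
      simp [Matrix.add_mulVec]⟩
  exact (Submodule.finrank_mono h).trans
    (Submodule.finrank_add_le_finrank_add_finrank _ _)

lemma rank_smul_le' {d : ℕ} (c : ℝ) (A : Matrix (Fin d) (Fin d) ℝ) :
    (c • A).rank ≤ A.rank := by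
  unfold Matrix.rank
  apply Submodule.finrank_mono
  rintro x ⟨v, rfl⟩
  exact ⟨c • v, by simp [Matrix.mulVec_smul, Matrix.smul_mulVec]⟩

lemma rank_sub_le' {d : ℕ} (A B : Matrix (Fin d) (Fin d) ℝ) :
    (A - B).rank ≤ A.rank + B.rank := by
  have h1 := rank_add_le' A ((-1 : ℝ) • B)
  have h2 := rank_smul_le' (-1 : ℝ) B
  have h3 : (A - B).rank ≤ A.rank + ((-1 : ℝ) • B).rank := by
    simpa [sub_eq_add_neg, neg_one_smul] using h1
  omega

lemma core_bound {d m r r' : ℕ} (δ : ℝ)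
    (𝒜 : Matrix (Fin d) (Fin d) ℝ →ₗ[ℝ] (Fin m → ℝ))
    (hRIP : ∀ Z : Matrix (Fin d) (Fin d) ℝ, Z.IsSymm → Z.rank ≤ r + r' →
      (1 - δ) * frobNorm Z ^ 2 ≤ ∑ i, 𝒜 Z i ^ 2 ∧
        ∑ i, 𝒜 Z i ^ 2 ≤ (1 + δ) * frobNorm Z ^ 2)
    (X Y : Matrix (Fin d) (Fin d) ℝ)
    (hX : X.IsSymm) (hrX : X.rank ≤ r)
    (hY : Y.IsSymm) (hrY : Y.rank ≤ r') :
    |tinner X Y - ∑ i, 𝒜 X i * 𝒜 Y i| ≤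
      δ / 2 * (frobNorm X ^ 2 + frobNorm Y ^ 2) := by
  have hsP : (X + Y).IsSymm := by simp [Matrix.IsSymm, Matrix.transpose_add, hX.eq, hY.eq]
  have hsQ : (X - Y).IsSymm := by simp [Matrix.IsSymm, Matrix.transpose_sub, hX.eq, hY.eq]
  have hrP : (X + Y).rank ≤ r + r' := (rank_add_le' X Y).trans (by omega)
  have hrQ : (X - Y).rank ≤ r + r' := (rank_sub_le' X Y).trans (by omega)
  obtain ⟨hP1, hP2⟩ := hRIP (X + Y) hsP hrP
  obtain ⟨hQ1, hQ2⟩ := hRIP (X - Y) hsQ hrQ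
  have hFP : (0:ℝ) ≤ frobNorm (X + Y) ^ 2 := sq_nonneg _
  have hFQ : (0:ℝ) ≤ frobNorm (X - Y) ^ 2 := sq_nonneg _
  have h1 : frobNorm (X + Y) ^ 2 - frobNorm (X - Y) ^ 2 = 4 * tinner X Y := by
    rw [frob_sq, frob_sq, tinner_eq, ← Finset.sum_sub_distrib, Finset.mul_sum]
    refine Finset.sum_congr rfl fun i _ => ?_
    rw [← Finset.sum_sub_distrib, Finset.mul_sum]
    refine Finset.sum_congr rfl fun j _ => ?_
    simp [Matrix.add_apply, Matrix.sub_apply]; ring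
  have h2 : (∑ i, 𝒜 (X + Y) i ^ 2) - (∑ i, 𝒜 (X - Y) i ^ 2)
      = 4 * ∑ i, 𝒜 X i * 𝒜 Y i := by
    rw [← Finset.sum_sub_distrib, Finset.mul_sum]
    refine Finset.sum_congr rfl fun i _ => ?_
    simp only [map_add, map_sub, Pi.add_apply, Pi.sub_apply]
    ring
  have h3 : frobNorm (X + Y) ^ 2 + frobNorm (X - Y) ^ 2
      = 2 * (frobNorm X ^ 2 + frobNorm Y ^ 2) := by
    rw [frob_sq, frob_sq, frob_sq, frob_sq, mul_add, Finset.mul_sum, Finset.mul_sum,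
      ← Finset.sum_add_distrib, ← Finset.sum_add_distrib]
    refine Finset.sum_congr rfl fun i _ => ?_
    rw [Finset.mul_sum, Finset.mul_sum, ← Finset.sum_add_distrib, ← Finset.sum_add_distrib]
    refine Finset.sum_congr rfl fun j _ => ?_
    simp [Matrix.add_apply, Matrix.sub_apply]; ring
  have key : |4 * (tinner X Y - ∑ i, 𝒜 X i * 𝒜 Y i)| ≤
      δ * (frobNorm (X + Y) ^ 2 + frobNorm (X - Y) ^ 2) := by
    have e : 4 * (tinner X Y - ∑ i, 𝒜 X i * 𝒜 Y i)
        = (frobNorm (X + Y) ^ 2 - ∑ i, 𝒜 (X + Y) i ^ 2)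
          - (frobNorm (X - Y) ^ 2 - ∑ i, 𝒜 (X - Y) i ^ 2) := by
      rw [mul_sub, ← h1, ← h2]; ring
    rw [e]
    have b1 : |frobNorm (X + Y) ^ 2 - ∑ i, 𝒜 (X + Y) i ^ 2| ≤ δ * frobNorm (X + Y) ^ 2 := by
      rw [abs_le]; constructor <;> nlinarith
    have b2 : |frobNorm (X - Y) ^ 2 - ∑ i, 𝒜 (X - Y) i ^ 2| ≤ δ * frobNorm (X - Y) ^ 2 := by
      rw [abs_le]; constructor <;> nlinarith
    calc _ ≤ |frobNorm (X + Y) ^ 2 - ∑ i, 𝒜 (X + Y) i ^ 2|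
            + |frobNorm (X - Y) ^ 2 - ∑ i, 𝒜 (X - Y) i ^ 2| := abs_sub _ _
      _ ≤ _ := by rw [mul_add]; exact add_le_add b1 b2
  rw [abs_mul, abs_of_nonneg (by norm_num : (0:ℝ) ≤ 4), h3] at key
  linarith

lemma tinner_smul_smul {d : ℕ} (a b : ℝ) (X Y : Matrix (Fin d) (Fin d) ℝ) :
    tinner (a • X) (b • Y) = (a * b) * tinner X Y := by
  simp only [tinner_eq, Finset.mul_sum]
  refine Finset.sum_congr rfl fun i _ => Finset.sum_congr rfl fun j _ => ?_
  simp [Matrix.smul_apply]; ring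

lemma frob_smul_sq {d : ℕ} (a : ℝ) (X : Matrix (Fin d) (Fin d) ℝ) :
    frobNorm (a • X) ^ 2 = a ^ 2 * frobNorm X ^ 2 := by
  simp only [frob_sq, Finset.mul_sum]
  refine Finset.sum_congr rfl fun i _ => Finset.sum_congr rfl fun j _ => ?_
  simp [Matrix.smul_apply]; ring

theorem statement0 {d m r r' : ℕ} (δ : ℝ) (hδ : 0 ≤ δ)
    (𝒜 : Matrix (Fin d) (Fin d) ℝ →ₗ[ℝ] (Fin m → ℝ))
    (𝒜s : (Fin m → ℝ) →ₗ[ℝ] Matrix (Fin d) (Fin d) ℝ)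
    (hsym : ∀ y, (𝒜s y).IsSymm)
    (hadj : ∀ (y : Fin m → ℝ) (Z : Matrix (Fin d) (Fin d) ℝ), Z.IsSymm →
      tinner (𝒜s y) Z = ∑ i, y i * 𝒜 Z i)
    (hRIP : ∀ Z : Matrix (Fin d) (Fin d) ℝ, Z.IsSymm → Z.rank ≤ r + r' →
      (1 - δ) * frobNorm Z ^ 2 ≤ ∑ i, 𝒜 Z i ^ 2 ∧
        ∑ i, 𝒜 Z i ^ 2 ≤ (1 + δ) * frobNorm Z ^ 2)
    (Z₁ Z₂ : Matrix (Fin d) (Fin d) ℝ)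
    (hZ₁ : Z₁.IsSymm) (hr₁ : Z₁.rank ≤ r)
    (hZ₂ : Z₂.IsSymm) (hr₂ : Z₂.rank ≤ r') :
    |tinner (Z₁ - 𝒜s (𝒜 Z₁)) Z₂| ≤ δ * frobNorm Z₁ * frobNorm Z₂ := by
  have hLHS : tinner (Z₁ - 𝒜s (𝒜 Z₁)) Z₂ = tinner Z₁ Z₂ - ∑ i, 𝒜 Z₁ i * 𝒜 Z₂ i := by
    have hsub : tinner (Z₁ - 𝒜s (𝒜 Z₁)) Z₂ = tinner Z₁ Z₂ - tinner (𝒜s (𝒜 Z₁)) Z₂ := by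
      simp [tinner_eq, Matrix.sub_apply, sub_mul, Finset.sum_sub_distrib]
    rw [hsub, hadj _ _ hZ₂]
  rw [hLHS]
  rcases eq_or_lt_of_le (frob_nonneg Z₁) with hb | hb
  · obtain rfl := frob_eq_zero hb.symm
    simp [tinner_eq, ← hb]
  rcases eq_or_lt_of_le (frob_nonneg Z₂) with ha | ha
  · obtain rfl := frob_eq_zero ha.symm
    simp [tinner_eq, ← ha]
  set a := frobNorm Z₂ with ha_def
  set b := frobNorm Z₁ with hb_def
  have hsX : (a • Z₁).IsSymm := by simp [Matrix.IsSymm, Matrix.transpose_smul, hZ₁.eq]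
  have hsY : (b • Z₂).IsSymm := by simp [Matrix.IsSymm, Matrix.transpose_smul, hZ₂.eq]
  have hcore := core_bound δ 𝒜 hRIP (a • Z₁) (b • Z₂) hsX
    ((rank_smul_le' a Z₁).trans hr₁) hsY ((rank_smul_le' b Z₂).trans hr₂)
  have e1 : tinner (a • Z₁) (b • Z₂) = (a * b) * tinner Z₁ Z₂ := tinner_smul_smul a b Z₁ Z₂
  have e2 : (∑ i, 𝒜 (a • Z₁) i * 𝒜 (b • Z₂) i) = (a * b) * ∑ i, 𝒜 Z₁ i * 𝒜 Z₂ i := by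
    rw [Finset.mul_sum]
    refine Finset.sum_congr rfl fun i _ => ?_
    simp only [_root_.map_smul, Pi.smul_apply, smul_eq_mul]
    ring
  rw [e1, e2, ← mul_sub, abs_mul, frob_smul_sq, frob_smul_sq,
    abs_of_pos (mul_pos ha hb)] at hcore
  have hab : 0 < a * b := mul_pos ha hb
  nlinarith [abs_nonneg (tinner Z₁ Z₂ - ∑ i, 𝒜 Z₁ i * 𝒜 Z₂ i)]
end

section
/- Let A: S^d → R^m be a linear operator on symmetric d×d matrices satisfying the restricted isometry property of order r+2 with constant δ. Then for every symmetric matrix Z of rank at most r, the spectral norm bound ‖(I − A*A)(Z)‖ ≤ δ ‖Z‖_F holds. -/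
open scoped BigOperators
open Matrix

/-! ### Auxiliary lemmas -/

lemma matRank_add_le {n : ℕ} (A B : Matrix (Fin n) (Fin n) ℝ) :
    (A + B).rank ≤ A.rank + B.rank := by
  classical
  have h : LinearMap.range (A + B).mulVecLin ≤
      LinearMap.range A.mulVecLin ⊔ LinearMap.range B.mulVecLin := by
    rintro x ⟨v, rfl⟩
    rw [Matrix.mulVecLin_add]
    exact Submodule.add_mem_sup ⟨v, rfl⟩ ⟨v, rfl⟩
  exact (Submodule.finrank_mono h).trans
    (Submodule.finrank_add_le_finrank_add_finrank _ _)

lemma matRank_vecMulVec_le {n : ℕ} (w v : Fin n → ℝ) :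
    (Matrix.vecMulVec w v).rank ≤ 1 := by
  rw [Matrix.vecMulVec_eq (Fin 1)]
  exact (Matrix.rank_mul_le_left _ _).trans
    ((Matrix.rank_le_card_width _).trans (by simp))

lemma smul_vecMulVec {n : ℕ} (a : ℝ) (w v : Fin n → ℝ) :
    a • Matrix.vecMulVec w v = Matrix.vecMulVec (a • w) v := by
  ext i j
  simp [Matrix.vecMulVec_apply, mul_assoc]

lemma sq_expand {ι : Type*} [Fintype ι] (x y : ι → ℝ) (s : ℝ) :
    ∑ i, (x i + s * y i) ^ 2 =
      ∑ i, x i ^ 2 + 2 * s * (∑ i, x i * y i) + s ^ 2 * ∑ i, y i ^ 2 := by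
  rw [Finset.mul_sum, Finset.mul_sum, ← Finset.sum_add_distrib, ← Finset.sum_add_distrib]
  exact Finset.sum_congr rfl fun i _ => by ring

lemma sq_expand2 {d : ℕ} (X Y : Matrix (Fin d) (Fin d) ℝ) (s : ℝ) :
    ∑ i, ∑ j, (X i j + s * Y i j) ^ 2 =
      (∑ i, ∑ j, X i j ^ 2) + 2 * s * (∑ i, ∑ j, X i j * Y i j)
        + s ^ 2 * ∑ i, ∑ j, Y i j ^ 2 := by
  calc ∑ i, ∑ j, (X i j + s * Y i j) ^ 2
      = ∑ i, (∑ j, X i j ^ 2 + 2 * s * (∑ j, X i j * Y i j) + s ^ 2 * ∑ j, Y i j ^ 2) :=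
        Finset.sum_congr rfl fun i _ => sq_expand _ _ _
    _ = _ := by
        rw [Finset.sum_add_distrib, Finset.sum_add_distrib, ← Finset.mul_sum, ← Finset.mul_sum]

/-- The key quadratic-form bound. -/
lemma key_bound {d m r : ℕ} (δ : ℝ)
    (𝒜 : Matrix (Fin d) (Fin d) ℝ →ₗ[ℝ] (Fin m → ℝ))
    (𝒜s : (Fin m → ℝ) →ₗ[ℝ] Matrix (Fin d) (Fin d) ℝ)
    (hadj : ∀ (y : Fin m → ℝ) (Z : Matrix (Fin d) (Fin d) ℝ), Z.IsSymm →
      tinner (𝒜s y) Z = ∑ i, y i * 𝒜 Z i)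
    (hRIP : ∀ Z : Matrix (Fin d) (Fin d) ℝ, Z.IsSymm → Z.rank ≤ r + 2 →
      (1 - δ) * frobNorm Z ^ 2 ≤ ∑ i, 𝒜 Z i ^ 2 ∧
        ∑ i, 𝒜 Z i ^ 2 ≤ (1 + δ) * frobNorm Z ^ 2)
    (Z : Matrix (Fin d) (Fin d) ℝ) (hZ : Z.IsSymm) (hr : Z.rank ≤ r)
    (ha : 0 < frobNorm Z)
    (u : Fin d → ℝ) (hu : ∑ j, u j ^ 2 = 1) :
    |∑ i, ∑ j, (Z - 𝒜s (𝒜 Z)) i j * (u i * u j)| ≤ δ * frobNorm Z := by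
  classical
  set a := frobNorm Z with ha'
  set W : Matrix (Fin d) (Fin d) ℝ := Matrix.vecMulVec u u with hW
  have hfrob : ∀ V : Matrix (Fin d) (Fin d) ℝ, frobNorm V ^ 2 = ∑ i, ∑ j, V i j ^ 2 := by
    intro V
    rw [frobNorm, Real.sq_sqrt]
    positivity
  have hWapp : ∀ i j, W i j = u i * u j := fun i j => rfl
  have hWs : W.IsSymm := by
    ext i j
    rw [Matrix.transpose_apply, hWapp, hWapp]
    ring
  have fW : ∑ i, ∑ j, W i j ^ 2 = 1 := by
    calc ∑ i, ∑ j, W i j ^ 2 = ∑ i, ∑ j, u i ^ 2 * u j ^ 2 :=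
          Finset.sum_congr rfl fun i _ => Finset.sum_congr rfl fun j _ => by
            rw [hWapp]; ring
      _ = (∑ i, u i ^ 2) * ∑ j, u j ^ 2 := by rw [← Finset.sum_mul_sum]
      _ = 1 := by rw [hu, one_mul]
  have fZ : ∑ i, ∑ j, Z i j ^ 2 = a ^ 2 := (hfrob Z).symm
  -- rank and symmetry of perturbations
  have hsymm : ∀ s : ℝ, (Z + s • W).IsSymm := by
    intro s
    rw [Matrix.IsSymm, Matrix.transpose_add, Matrix.transpose_smul, hWs, hZ]
  have hrank : ∀ s : ℝ, (Z + s • W).rank ≤ r + 2 := by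
    intro s
    refine (matRank_add_le _ _).trans ?_
    have h1 : (s • W).rank ≤ 1 := by
      rw [hW, smul_vecMulVec]; exact matRank_vecMulVec_le _ _
    omega
  -- entrywise and 𝒜-image expansions
  have happ : ∀ s : ℝ, ∀ i j, (Z + s • W) i j = Z i j + s * W i j := by
    intro s i j; simp
  have hAapp : ∀ s : ℝ, ∀ i, 𝒜 (Z + s • W) i = 𝒜 Z i + s * 𝒜 W i := by
    intro s i
    rw [map_add, LinearMap.map_smul]
    simp
  have hq : ∀ s : ℝ, ∑ i, 𝒜 (Z + s • W) i ^ 2 =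
      ∑ i, 𝒜 Z i ^ 2 + 2 * s * (∑ i, 𝒜 Z i * 𝒜 W i) + s ^ 2 * ∑ i, 𝒜 W i ^ 2 := by
    intro s
    rw [Finset.sum_congr rfl fun i _ => by rw [hAapp s i]]
    exact sq_expand _ _ _
  have hf : ∀ s : ℝ, frobNorm (Z + s • W) ^ 2 =
      a ^ 2 + 2 * s * (∑ i, ∑ j, Z i j * W i j) + s ^ 2 := by
    intro s
    rw [hfrob, Finset.sum_congr rfl fun i _ => Finset.sum_congr rfl fun j _ => by
      rw [happ s i j], sq_expand2, fZ, fW, mul_one]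
  set p : ℝ := ∑ i, ∑ j, Z i j * W i j with hp
  set pA : ℝ := ∑ i, 𝒜 Z i * 𝒜 W i with hpA
  -- RIP at s = a and s = -a
  obtain ⟨loP, upP⟩ := hRIP (Z + a • W) (hsymm a) (hrank a)
  obtain ⟨loM, upM⟩ := hRIP (Z + (-a) • W) (hsymm (-a)) (hrank (-a))
  rw [hq a, hf a] at loP upP
  rw [hq (-a), hf (-a)] at loM upM
  -- the quadratic form equals p - pA
  have hquad : ∑ i, ∑ j, (Z - 𝒜s (𝒜 Z)) i j * (u i * u j) = p - pA := by
    have h1 : ∑ i, ∑ j, (Z - 𝒜s (𝒜 Z)) i j * (u i * u j) =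
        (∑ i, ∑ j, Z i j * (u i * u j)) - ∑ i, ∑ j, (𝒜s (𝒜 Z)) i j * (u i * u j) := by
      rw [← Finset.sum_sub_distrib]
      refine Finset.sum_congr rfl fun i _ => ?_
      rw [← Finset.sum_sub_distrib]
      refine Finset.sum_congr rfl fun j _ => ?_
      simp [Matrix.sub_apply, sub_mul]
    have h2 : ∑ i, ∑ j, (𝒜s (𝒜 Z)) i j * (u i * u j) = pA := by
      have := hadj (𝒜 Z) W hWs
      rw [tinner_eq] at this
      rw [hpA]
      rw [show (∑ i, ∑ j, (𝒜s (𝒜 Z)) i j * (u i * u j)) =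
        ∑ i, ∑ j, (𝒜s (𝒜 Z)) i j * W i j from rfl, this]
    rw [h1, h2, hp]
    have h3 : ∑ i, ∑ j, Z i j * (u i * u j) = ∑ i, ∑ j, Z i j * W i j :=
      Finset.sum_congr rfl fun i _ => Finset.sum_congr rfl fun j _ => by rw [hWapp]
    rw [h3]
  rw [hquad]
  have key₁ : pA - p ≤ δ * a := by nlinarith [upP, loM, mul_pos ha ha]
  have key₂ : p - pA ≤ δ * a := by nlinarith [loP, upM, mul_pos ha ha]
  rw [abs_le]
  constructor <;> nlinarith

theorem statement2 {d m r : ℕ} (δ : ℝ) (hδ : 0 ≤ δ)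
    (𝒜 : Matrix (Fin d) (Fin d) ℝ →ₗ[ℝ] (Fin m → ℝ))
    (𝒜s : (Fin m → ℝ) →ₗ[ℝ] Matrix (Fin d) (Fin d) ℝ)
    (hsym : ∀ y, (𝒜s y).IsSymm)
    (hadj : ∀ (y : Fin m → ℝ) (Z : Matrix (Fin d) (Fin d) ℝ), Z.IsSymm →
      tinner (𝒜s y) Z = ∑ i, y i * 𝒜 Z i)
    (hRIP : ∀ Z : Matrix (Fin d) (Fin d) ℝ, Z.IsSymm → Z.rank ≤ r + 2 →
      (1 - δ) * frobNorm Z ^ 2 ≤ ∑ i, 𝒜 Z i ^ 2 ∧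
        ∑ i, 𝒜 Z i ^ 2 ≤ (1 + δ) * frobNorm Z ^ 2)
    (Z : Matrix (Fin d) (Fin d) ℝ) (hZ : Z.IsSymm) (hr : Z.rank ≤ r) :
    specNorm (Z - 𝒜s (𝒜 Z)) ≤ δ * frobNorm Z := by
  classical
  by_cases h0 : Z = 0
  · subst h0
    have hM0 : (0 : Matrix (Fin d) (Fin d) ℝ) - 𝒜s (𝒜 0) = 0 := by simp
    rw [hM0]
    have : specNorm (0 : Matrix (Fin d) (Fin d) ℝ) = 0 := by
      rw [specNorm, map_zero, map_zero, norm_zero]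
    rw [this]
    have : frobNorm (0 : Matrix (Fin d) (Fin d) ℝ) = 0 := by
      simp [frobNorm]
    rw [this, mul_zero]
  · -- positive Frobenius norm
    have ha : 0 < frobNorm Z := by
      rw [frobNorm, Real.sqrt_pos]
      by_contra h
      push_neg at h
      have hsum : ∑ i, ∑ j, Z i j ^ 2 = 0 := le_antisymm h (by positivity)
      apply h0
      ext i j
      have h1 : ∀ i ∈ Finset.univ, (0:ℝ) ≤ ∑ j, Z i j ^ 2 := fun i _ => by positivity
      have h2 := (Finset.sum_eq_zero_iff_of_nonneg h1).mp hsum i (Finset.mem_univ i)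
      have h3 := (Finset.sum_eq_zero_iff_of_nonneg
        (fun j _ => sq_nonneg (Z i j))).mp h2 j (Finset.mem_univ j)
      simpa using pow_eq_zero_iff (n := 2) (by norm_num) |>.mp h3
    set M : Matrix (Fin d) (Fin d) ℝ := Z - 𝒜s (𝒜 Z) with hMdef
    have hMs : M.IsSymm := by
      rw [Matrix.IsSymm, hMdef, Matrix.transpose_sub, hZ, hsym (𝒜 Z)]
    have hMh : M.IsHermitian := by
      rw [Matrix.IsHermitian, Matrix.conjTranspose_eq_transpose_of_trivial]
      exact hMs
    set b := hMh.eigenvectorBasis with hb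
    set ev := hMh.eigenvalues with hev
    set C := δ * frobNorm Z with hC
    have hC0 : 0 ≤ C := by positivity
    -- eigenvalue bound
    have heig : ∀ i, |ev i| ≤ C := by
      intro i
      set u : Fin d → ℝ := ⇑(b i) with hu'
      have hnorm : ‖b i‖ = 1 := b.orthonormal.1 i
      have hu : ∑ j, u j ^ 2 = 1 := by
        have h2 : ∑ j, ‖b i j‖ ^ 2 = 1 := by
          rw [EuclideanSpace.norm_eq] at hnorm
          have h3 := congrArg (fun t : ℝ => t ^ 2) hnorm
          simp only [one_pow] at h3
          rwa [Real.sq_sqrt (by positivity)] at h3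
        calc ∑ j, u j ^ 2 = ∑ j, ‖b i j‖ ^ 2 :=
              Finset.sum_congr rfl fun j _ => by
                rw [Real.norm_eq_abs, sq_abs]
          _ = 1 := h2
      have hmv : M *ᵥ u = ev i • u := hMh.mulVec_eigenvectorBasis i
      have hquad : ∑ i', ∑ j, M i' j * (u i' * u j) = ev i := by
        calc ∑ i', ∑ j, M i' j * (u i' * u j) = ∑ i', u i' * (M *ᵥ u) i' := by
              refine Finset.sum_congr rfl fun i' _ => ?_
              rw [Matrix.mulVec, dotProduct, Finset.mul_sum]
              exact Finset.sum_congr rfl fun j _ => by ring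
          _ = ∑ i', u i' * (ev i * u i') := by
              rw [hmv]
              exact Finset.sum_congr rfl fun i' _ => by simp [smul_eq_mul]
          _ = ev i * ∑ i', u i' ^ 2 := by
              rw [Finset.mul_sum]
              exact Finset.sum_congr rfl fun i' _ => by ring
          _ = ev i := by rw [hu, mul_one]
      have := key_bound δ 𝒜 𝒜s hadj hRIP Z hZ hr ha u hu
      rw [hquad] at this
      exact this
    -- operator norm bound
    rw [specNorm]
    refine ContinuousLinearMap.opNorm_le_bound _ hC0 fun x => ?_
    rw [LinearMap.coe_toContinuousLinearMap']
    have hTb : ∀ j, Matrix.toEuclideanLin M (b j) = ev j • b j := fun j => by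
      have h := hMh.mulVec_eigenvectorBasis j
      ext k
      simpa [Matrix.toEuclideanLin_apply] using congrFun h k
    have horth : ∀ i j : Fin d, (inner ℝ (b i) (b j) : ℝ) = if i = j then 1 else 0 :=
      orthonormal_iff_ite.mp b.orthonormal
    have hrepr : ∀ i, b.repr (Matrix.toEuclideanLin M x) i = ev i * b.repr x i := by
      intro i
      rw [OrthonormalBasis.repr_apply_apply]
      conv_lhs => rw [← b.sum_repr x, map_sum]
      rw [inner_sum]
      simp only [LinearMap.map_smul, hTb, smul_smul, real_inner_smul_right, horth,
        mul_ite, mul_one, mul_zero]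
      rw [Finset.sum_eq_single i (fun j _ hj => by simp [Ne.symm hj]) (by simp)]
      rw [if_pos rfl]
      ring
    have hxnorm : ‖x‖ = Real.sqrt (∑ i, b.repr x i ^ 2) := by
      rw [← b.repr.norm_map x, EuclideanSpace.norm_eq]
      congr 1
      exact Finset.sum_congr rfl fun i _ => by rw [Real.norm_eq_abs, sq_abs]
    have hTnorm : ‖Matrix.toEuclideanLin M x‖ =
        Real.sqrt (∑ i, (ev i * b.repr x i) ^ 2) := by
      rw [← b.repr.norm_map, EuclideanSpace.norm_eq]
      congr 1
      exact Finset.sum_congr rfl fun i _ => by rw [Real.norm_eq_abs, sq_abs, hrepr]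
    rw [hTnorm, hxnorm]
    have hle : ∑ i, (ev i * b.repr x i) ^ 2 ≤ C ^ 2 * ∑ i, b.repr x i ^ 2 := by
      rw [Finset.mul_sum]
      refine Finset.sum_le_sum fun i _ => ?_
      have h1 : ev i ^ 2 ≤ C ^ 2 := by
        have := heig i
        nlinarith [abs_nonneg (ev i), sq_abs (ev i)]
      nlinarith [sq_nonneg (b.repr x i)]
    calc Real.sqrt (∑ i, (ev i * b.repr x i) ^ 2)
        ≤ Real.sqrt (C ^ 2 * ∑ i, b.repr x i ^ 2) := Real.sqrt_le_sqrt hle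
      _ = C * Real.sqrt (∑ i, b.repr x i ^ 2) := by
          rw [Real.sqrt_mul (sq_nonneg C), Real.sqrt_sq hC0]
end

section
/- Let X_⋆ be a symmetric PSD d×d matrix of rank r with top eigenvector matrix V_⋆ ∈ R^{d×r} and complement V_⊥, and let U, W ∈ R^{d×r} and μ > 0. Suppose ‖V_⊥^T V_U‖ ≤ c₁, ‖U‖ ≤ √(2‖X_⋆‖), ‖UU^T − X_⋆‖ ≤ c₂ σ_min(X_⋆), ‖UU^T − WW^T‖_F ≤ c₃ σ_min(X_⋆), and μ ≤ c₄/(κ‖X_⋆‖) for sufficiently small absolute constants c₁,…,c₄, where κ = ‖X_⋆‖/σ_min(X_⋆). Then: (i) all eigenvalues of Id + μ(X_⋆ − UU^T − WW^T) are nonnegative; (ii) λ_max(V_⋆^T (X_⋆ − UU^T − WW^T) V_⋆) ≤ −σ_min(X_⋆)/2; and (iii) ‖Id + μ(X_⋆ − UU^T − WW^T)‖ ≤ 1 + μσ_min(X_⋆)/128. -/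
set_option maxHeartbeats 1000000


open scoped BigOperators
open Matrix

/-! ### Auxiliary lemmas -/

section Aux

lemma euclid_norm' {d : ℕ} (y : Fin d → ℝ) :
    ‖(WithLp.equiv 2 (Fin d → ℝ)).symm y‖ = Real.sqrt (∑ i, y i ^ 2) := by
  rw [EuclideanSpace.norm_eq]
  congr 1
  refine Finset.sum_congr rfl fun i _ => ?_
  simp [Real.norm_eq_abs, sq_abs]

lemma specNorm_nonneg' {d₁ d₂ : ℕ} (A : Matrix (Fin d₁) (Fin d₂) ℝ) : 0 ≤ specNorm A :=
  norm_nonneg _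

lemma specNorm_zero' {d₁ d₂ : ℕ} : specNorm (0 : Matrix (Fin d₁) (Fin d₂) ℝ) = 0 := by
  unfold specNorm
  rw [map_zero, map_zero, norm_zero]

lemma specNorm_neg' {d₁ d₂ : ℕ} (A : Matrix (Fin d₁) (Fin d₂) ℝ) :
    specNorm (-A) = specNorm A := by
  unfold specNorm
  rw [map_neg, map_neg, norm_neg]

lemma sq_sum_mulVec_le' {d₁ d₂ : ℕ} (A : Matrix (Fin d₁) (Fin d₂) ℝ) (y : Fin d₂ → ℝ) :
    ∑ i, (A *ᵥ y) i ^ 2 ≤ specNorm A ^ 2 * ∑ i, y i ^ 2 := by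
  have h := (LinearMap.toContinuousLinearMap (Matrix.toEuclideanLin A)).le_opNorm
    ((WithLp.equiv 2 (Fin d₂ → ℝ)).symm y)
  rw [LinearMap.coe_toContinuousLinearMap', show ∀ v, Matrix.toEuclideanLin A
      ((WithLp.equiv 2 (Fin d₂ → ℝ)).symm v) = (WithLp.equiv 2 (Fin d₁ → ℝ)).symm (A *ᵥ v)
      from fun v => rfl,
    euclid_norm', euclid_norm'] at h
  replace h : Real.sqrt (∑ i, (A *ᵥ y) i ^ 2) ≤ specNorm A * Real.sqrt (∑ i, y i ^ 2) := h
  have h1 : (0:ℝ) ≤ ∑ i, (A *ᵥ y) i ^ 2 := Finset.sum_nonneg fun i _ => sq_nonneg _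
  have h2 : (0:ℝ) ≤ ∑ i, y i ^ 2 := Finset.sum_nonneg fun i _ => sq_nonneg _
  nlinarith [Real.sq_sqrt h1, Real.sq_sqrt h2, Real.sqrt_nonneg (∑ i, (A *ᵥ y) i ^ 2),
    Real.sqrt_nonneg (∑ i, y i ^ 2), specNorm_nonneg' A]

lemma specNorm_le_of' {d₁ d₂ : ℕ} (A : Matrix (Fin d₁) (Fin d₂) ℝ) (C : ℝ) (hC : 0 ≤ C)
    (h : ∀ y : Fin d₂ → ℝ, ∑ i, (A *ᵥ y) i ^ 2 ≤ C ^ 2 * ∑ i, y i ^ 2) :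
    specNorm A ≤ C := by
  apply ContinuousLinearMap.opNorm_le_bound _ hC
  intro x
  have hx : x = (WithLp.equiv 2 (Fin d₂ → ℝ)).symm ((WithLp.equiv 2 (Fin d₂ → ℝ)) x) := rfl
  rw [hx, LinearMap.coe_toContinuousLinearMap', show ∀ v, Matrix.toEuclideanLin A
      ((WithLp.equiv 2 (Fin d₂ → ℝ)).symm v) = (WithLp.equiv 2 (Fin d₁ → ℝ)).symm (A *ᵥ v)
      from fun v => rfl,
    euclid_norm', euclid_norm']
  set y := (WithLp.equiv 2 (Fin d₂ → ℝ)) x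
  calc Real.sqrt (∑ i, (A *ᵥ y) i ^ 2) ≤ Real.sqrt (C ^ 2 * ∑ i, y i ^ 2) :=
        Real.sqrt_le_sqrt (h y)
    _ = C * Real.sqrt (∑ i, y i ^ 2) := by
        rw [Real.sqrt_mul (sq_nonneg C), Real.sqrt_sq hC]

lemma abs_dot_mulVec_le' {d : ℕ} (A : Matrix (Fin d) (Fin d) ℝ) (y : Fin d → ℝ) :
    |y ⬝ᵥ A *ᵥ y| ≤ specNorm A * ∑ i, y i ^ 2 := by
  have hcs := Finset.sum_mul_sq_le_sq_mul_sq Finset.univ y (A *ᵥ y)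
  have h1 := sq_sum_mulVec_le' A y
  have h2 : (0:ℝ) ≤ ∑ i, y i ^ 2 := Finset.sum_nonneg fun i _ => sq_nonneg _
  have hd : y ⬝ᵥ A *ᵥ y = ∑ i, y i * (A *ᵥ y) i := rfl
  have hN := specNorm_nonneg' A
  rw [hd, abs_le]
  constructor <;> nlinarith [mul_nonneg hN h2, sq_nonneg (∑ i, y i * (A *ᵥ y) i)]

lemma specNorm_le_frobNorm' {d₁ d₂ : ℕ} (A : Matrix (Fin d₁) (Fin d₂) ℝ) :
    specNorm A ≤ frobNorm A := by
  have hf : (0:ℝ) ≤ ∑ i, ∑ j, A i j ^ 2 :=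
    Finset.sum_nonneg fun i _ => Finset.sum_nonneg fun j _ => sq_nonneg _
  apply specNorm_le_of' _ _ (Real.sqrt_nonneg _)
  intro y
  rw [Real.sq_sqrt hf]
  calc ∑ i, (A *ᵥ y) i ^ 2 ≤ ∑ i, ((∑ j, A i j ^ 2) * ∑ j, y j ^ 2) := by
        refine Finset.sum_le_sum fun i _ => ?_
        have := Finset.sum_mul_sq_le_sq_mul_sq Finset.univ (A i) y
        simpa [Matrix.mulVec, dotProduct] using this
    _ = (∑ i, ∑ j, A i j ^ 2) * ∑ j, y j ^ 2 := by rw [← Finset.sum_mul]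

lemma sum_sq_pos_of_ne' {d : ℕ} {u : Fin d → ℝ} (hu : u ≠ 0) : 0 < ∑ i, u i ^ 2 := by
  obtain ⟨i, hi⟩ := Function.ne_iff.mp hu
  exact Finset.sum_pos' (fun j _ => sq_nonneg _)
    ⟨i, Finset.mem_univ i, lt_of_le_of_ne (sq_nonneg _) (Ne.symm (pow_ne_zero 2 hi))⟩

lemma specNorm_le_of_quad' {d : ℕ} (B : Matrix (Fin d) (Fin d) ℝ) (C : ℝ) (hC : 0 ≤ C)
    (hsym : Bᵀ = B)
    (hpsd : ∀ y : Fin d → ℝ, 0 ≤ y ⬝ᵥ B *ᵥ y)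
    (hub : ∀ y : Fin d → ℝ, y ⬝ᵥ B *ᵥ y ≤ C * ∑ i, y i ^ 2) :
    specNorm B ≤ C := by
  apply specNorm_le_of' _ _ hC
  intro y
  set z := B *ᵥ y with hz
  have hzz : ∑ i, z i ^ 2 = z ⬝ᵥ z := by
    simp [dotProduct, sq]
  have key : (z ⬝ᵥ B *ᵥ y) ^ 2 ≤ (z ⬝ᵥ B *ᵥ z) * (y ⬝ᵥ B *ᵥ y) := by
    have hsymq : y ⬝ᵥ B *ᵥ z = z ⬝ᵥ B *ᵥ y := by
      rw [Matrix.dotProduct_mulVec, ← Matrix.mulVec_transpose, hsym, dotProduct_comm]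
    have hq : ∀ t : ℝ, 0 ≤ (y ⬝ᵥ B *ᵥ y) * (t * t) + (2 * (z ⬝ᵥ B *ᵥ y)) * t + z ⬝ᵥ B *ᵥ z := by
      intro t
      have h0 := hpsd (z + t • y)
      have hexp : (z + t • y) ⬝ᵥ B *ᵥ (z + t • y)
          = z ⬝ᵥ B *ᵥ z + t * (z ⬝ᵥ B *ᵥ y) + t * (y ⬝ᵥ B *ᵥ z) + t * t * (y ⬝ᵥ B *ᵥ y) := by
        simp [Matrix.mulVec_add, Matrix.mulVec_smul, dotProduct_add, add_dotProduct,
          smul_dotProduct, dotProduct_smul, smul_eq_mul]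
        ring
      rw [hexp, hsymq] at h0
      linarith
    have := discrim_le_zero hq
    rw [discrim] at this
    nlinarith
  have hzy : z ⬝ᵥ B *ᵥ y = z ⬝ᵥ z := rfl
  have h1 := hub z
  have h2 := hub y
  have h3 := hpsd y
  have h4 : (0:ℝ) ≤ ∑ i, y i ^ 2 := Finset.sum_nonneg fun i _ => sq_nonneg _
  have h5 : (0:ℝ) ≤ ∑ i, z i ^ 2 := Finset.sum_nonneg fun i _ => sq_nonneg _
  rw [hzy, ← hzz] at key
  rcases eq_or_lt_of_le h5 with h0 | h0
  · rw [← h0]; positivity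
  · refine le_of_mul_le_mul_right ?_ h0
    nlinarith [mul_le_mul h1 h2 h3 (mul_nonneg hC h5), hpsd z]

section Spectral
variable {d : ℕ} {B : Matrix (Fin d) (Fin d) ℝ} (hB : B.IsHermitian)

lemma star_mul_self_V' : (star (hB.eigenvectorUnitary : Matrix (Fin d) (Fin d) ℝ)) *
    (hB.eigenvectorUnitary : Matrix (Fin d) (Fin d) ℝ) = 1 :=
  Unitary.coe_star_mul_self _

lemma mul_star_self_V' : (hB.eigenvectorUnitary : Matrix (Fin d) (Fin d) ℝ) *
    (star (hB.eigenvectorUnitary : Matrix (Fin d) (Fin d) ℝ)) = 1 :=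
  Unitary.coe_mul_star_self _

lemma spectral_real' : B = (hB.eigenvectorUnitary : Matrix (Fin d) (Fin d) ℝ) *
    diagonal hB.eigenvalues * star (hB.eigenvectorUnitary : Matrix (Fin d) (Fin d) ℝ) := by
  have := hB.spectral_theorem
  simpa using this

lemma exists_eigenvalue_eq' {u : Fin d → ℝ} {t : ℝ} (hu : u ≠ 0) (h : B *ᵥ u = t • u) :
    ∃ j, hB.eigenvalues j = t := by
  set V : Matrix (Fin d) (Fin d) ℝ := (hB.eigenvectorUnitary : Matrix (Fin d) (Fin d) ℝ) with hV
  set w : Fin d → ℝ := star V *ᵥ u with hw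
  have hwne : w ≠ 0 := by
    intro h0
    apply hu
    have hVu : V *ᵥ w = u := by
      rw [hw, Matrix.mulVec_mulVec, mul_star_self_V' hB, Matrix.one_mulVec]
    rw [← hVu, h0, Matrix.mulVec_zero]
  have hDw : diagonal hB.eigenvalues *ᵥ w = t • w := by
    have h1 : star V * B = diagonal hB.eigenvalues * star V := by
      conv_lhs => rw [spectral_real' hB]
      rw [← hV, ← Matrix.mul_assoc, ← Matrix.mul_assoc, star_mul_self_V' hB, Matrix.one_mul]
    calc diagonal hB.eigenvalues *ᵥ w = (diagonal hB.eigenvalues * star V) *ᵥ u := by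
          rw [hw, Matrix.mulVec_mulVec]
      _ = (star V * B) *ᵥ u := by rw [h1]
      _ = star V *ᵥ (B *ᵥ u) := by rw [Matrix.mulVec_mulVec]
      _ = t • w := by rw [h, Matrix.mulVec_smul, hw]
  obtain ⟨j, hj⟩ := Function.ne_iff.mp hwne
  refine ⟨j, ?_⟩
  have h2 := congrFun hDw j
  rw [Matrix.mulVec_diagonal] at h2
  have h3 : hB.eigenvalues j * w j = t * w j := h2
  exact mul_right_cancel₀ hj h3

lemma exists_eigenvector' (j : Fin d) :
    ∃ u : Fin d → ℝ, u ≠ 0 ∧ B *ᵥ u = hB.eigenvalues j • u := by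
  refine ⟨⇑(hB.eigenvectorBasis j), ?_, hB.mulVec_eigenvectorBasis j⟩
  intro h0
  apply hB.eigenvectorBasis.orthonormal.ne_zero j
  ext i
  exact congrFun h0 i

end Spectral

lemma transpose_of_herm' {d : ℕ} {Xs : Matrix (Fin d) (Fin d) ℝ} (h : Xs.IsHermitian) :
    Xsᵀ = Xs := by
  ext i j
  have := congrFun (congrFun h i) j
  simpa using this

lemma quad_lower' {d : ℕ} {Xs : Matrix (Fin d) (Fin d) ℝ} (hPSD : Xs.PosSemidef) {σ : ℝ}
    (hσ : ∀ i, hPSD.1.eigenvalues i ≠ 0 → σ ≤ hPSD.1.eigenvalues i)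
    {y : Fin d → ℝ} (hy : ∃ z, Xs *ᵥ z = y) :
    σ * (∑ i, y i ^ 2) ≤ y ⬝ᵥ Xs *ᵥ y := by
  set V : Matrix (Fin d) (Fin d) ℝ := (hPSD.1.eigenvectorUnitary : Matrix (Fin d) (Fin d) ℝ)
    with hV
  set lam := hPSD.1.eigenvalues with hlam
  set w : Fin d → ℝ := star V *ᵥ y with hw
  have hstar : star V = Vᵀ := by
    ext i j; simp [Matrix.star_apply]
  have hdotV : ∀ q : Fin d → ℝ, y ⬝ᵥ V *ᵥ q = w ⬝ᵥ q := by
    intro q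
    rw [Matrix.dotProduct_mulVec, ← Matrix.mulVec_transpose, ← hstar, ← hw]
  have h1 : y ⬝ᵥ Xs *ᵥ y = ∑ i, lam i * w i ^ 2 := by
    conv_lhs => rw [spectral_real' hPSD.1]
    rw [← hV, ← hlam, ← Matrix.mulVec_mulVec, ← Matrix.mulVec_mulVec, hdotV, ← hw]
    simp [dotProduct, Matrix.mulVec_diagonal]
    refine Finset.sum_congr rfl fun i _ => by ring
  have h2 : ∑ i, y i ^ 2 = ∑ i, w i ^ 2 := by
    have hyy : y ⬝ᵥ y = w ⬝ᵥ w := by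
      have hid : (V * star V) *ᵥ y = y := by rw [mul_star_self_V' hPSD.1, Matrix.one_mulVec]
      calc y ⬝ᵥ y = y ⬝ᵥ (V *ᵥ (star V *ᵥ y)) := by rw [Matrix.mulVec_mulVec, hid]
        _ = w ⬝ᵥ w := by rw [hdotV, hw]
    simpa [dotProduct, sq] using hyy
  have h3 : ∀ i, lam i = 0 → w i = 0 := by
    obtain ⟨z, hz⟩ := hy
    intro i hi
    have hwz : w = diagonal lam *ᵥ (star V *ᵥ z) := by
      rw [hw, ← hz, Matrix.mulVec_mulVec, Matrix.mulVec_mulVec]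
      congr 1
      conv_lhs => rw [spectral_real' hPSD.1, ← hV, ← hlam]
      rw [← Matrix.mul_assoc, ← Matrix.mul_assoc, star_mul_self_V' hPSD.1, Matrix.one_mul]
    rw [hwz]
    rw [Matrix.mulVec_diagonal, hi, zero_mul]
  rw [h1, h2, Finset.mul_sum]
  refine Finset.sum_le_sum fun i _ => ?_
  rcases eq_or_ne (lam i) 0 with h | h
  · rw [h, h3 i h]; simp
  · exact mul_le_mul_of_nonneg_right (hσ i h) (sq_nonneg _)

lemma sigma_facts' {d : ℕ} {Xs : Matrix (Fin d) (Fin d) ℝ} (hPSD : Xs.PosSemidef) (hX : Xs ≠ 0) :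
    0 < sigmaMin Xs ∧ sigmaMin Xs ≤ specNorm Xs ∧
      ∀ i, hPSD.1.eigenvalues i ≠ 0 → sigmaMin Xs ≤ hPSD.1.eigenvalues i := by
  set hB := Matrix.isHermitian_conjTranspose_mul_self Xs with hBdef
  set S : Set ℝ := {s : ℝ | 0 < s ∧ ∃ i, s ^ 2 = hB.eigenvalues i} with hS
  have hsig : sigmaMin Xs = sInf S := rfl
  have hfin : S.Finite := by
    apply Set.Finite.subset (Set.finite_range fun i => Real.sqrt (hB.eigenvalues i))
    rintro s ⟨hs0, i, hsi⟩
    refine ⟨i, ?_⟩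
    show Real.sqrt (hB.eigenvalues i) = s
    rw [← hsi, Real.sqrt_sq hs0.le]
  have hsymm := transpose_of_herm' hPSD.1
  have hmem : ∀ i, hPSD.1.eigenvalues i ≠ 0 → hPSD.1.eigenvalues i ∈ S := by
    intro i hi
    have hpos : 0 < hPSD.1.eigenvalues i := lt_of_le_of_ne (hPSD.eigenvalues_nonneg i) (Ne.symm hi)
    obtain ⟨u, hu, huv⟩ := exists_eigenvector' hPSD.1 i
    have hBu : (Xsᵀ * Xs) *ᵥ u = (hPSD.1.eigenvalues i ^ 2) • u := by
      rw [← Matrix.mulVec_mulVec, huv, Matrix.mulVec_smul, hsymm, huv, smul_smul, sq]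
    obtain ⟨j, hj⟩ := exists_eigenvalue_eq' hB hu hBu
    exact ⟨hpos, j, hj.symm⟩
  have hne : S.Nonempty := by
    have hex : ∃ i, hPSD.1.eigenvalues i ≠ 0 := by
      by_contra hall
      push_neg at hall
      apply hX
      have hlam0 : hPSD.1.eigenvalues = fun _ => 0 := funext hall
      have hsp := spectral_real' hPSD.1
      rw [hlam0, Matrix.diagonal_zero, Matrix.mul_zero, Matrix.zero_mul] at hsp
      exact hsp
    obtain ⟨i, hi⟩ := hex
    exact ⟨_, hmem i hi⟩
  have hmemS : sInf S ∈ S := hne.csInf_mem hfin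
  obtain ⟨hσpos, j, hσj⟩ := hmemS
  have hlow : ∀ s ∈ S, sInf S ≤ s := fun s hs => csInf_le hfin.bddBelow hs
  refine ⟨hσpos, ?_, fun i hi => hlow _ (hmem i hi)⟩
  obtain ⟨u, hu, huv⟩ := exists_eigenvector' hB j
  have hHT : Xsᴴ = Xsᵀ := by ext i j; simp
  rw [hsig]
  have hq : u ⬝ᵥ (Xsᴴ * Xs) *ᵥ u = ∑ i, (Xs *ᵥ u) i ^ 2 := by
    rw [← Matrix.mulVec_mulVec, Matrix.dotProduct_mulVec, hHT, Matrix.vecMul_transpose]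
    simp [dotProduct, sq]
  have hq2 : u ⬝ᵥ (Xsᴴ * Xs) *ᵥ u = hB.eigenvalues j * ∑ i, u i ^ 2 := by
    rw [huv, dotProduct_smul]
    simp [dotProduct, sq, Finset.mul_sum]
  have hS1 := sq_sum_mulVec_le' Xs u
  have hupos := sum_sq_pos_of_ne' hu
  have hNn := specNorm_nonneg' Xs
  have hσ2 : sInf S ^ 2 ≤ specNorm Xs ^ 2 := by nlinarith [hσj, hq, hq2, hS1]
  nlinarith [hσ2, hσpos, hNn]

lemma range_helper' {d r : ℕ} (Xs : Matrix (Fin d) (Fin d) ℝ) (Vs : Matrix (Fin d) (Fin r) ℝ)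
    (h2 : Vs * Vsᵀ * Xs = Xs) (hrk : Xs.rank = r) (x : Fin r → ℝ) :
    ∃ z, Xs *ᵥ z = Vs *ᵥ x := by
  have hfac : Xs = Vs * (Vsᵀ * Xs) := by rw [← Matrix.mul_assoc, h2]
  have hle : LinearMap.range Xs.mulVecLin ≤ LinearMap.range Vs.mulVecLin := by
    rw [hfac, Matrix.mulVecLin_mul]
    exact LinearMap.range_comp_le_range _ _
  have heq : LinearMap.range Xs.mulVecLin = LinearMap.range Vs.mulVecLin := by
    apply Submodule.eq_of_le_of_finrank_le hle
    have h1 : Module.finrank ℝ (LinearMap.range Vs.mulVecLin) ≤ r := by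
      have := LinearMap.finrank_range_le Vs.mulVecLin
      simpa using this
    have h2' : Module.finrank ℝ (LinearMap.range Xs.mulVecLin) = r := hrk
    omega
  have hmem : Vs *ᵥ x ∈ LinearMap.range Xs.mulVecLin := by
    rw [heq]; exact ⟨x, rfl⟩
  obtain ⟨z, hz⟩ := hmem
  exact ⟨z, hz⟩

end Aux

theorem statement8 :
    ∃ c₁ c₂ c₃ c₄ : ℝ, 0 < c₁ ∧ 0 < c₂ ∧ 0 < c₃ ∧ 0 < c₄ ∧
      ∀ (d r : ℕ), r ≤ d →
      ∀ (Xs : Matrix (Fin d) (Fin d) ℝ), Xs.PosSemidef → Xs.rank = r →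
      ∀ (Vs VU U W : Matrix (Fin d) (Fin r) ℝ) (Vp : Matrix (Fin d) (Fin (d - r)) ℝ)
        (μ : ℝ),
        Vsᵀ * Vs = 1 → Vs * Vsᵀ * Xs = Xs → Vpᵀ * Vp = 1 → Vsᵀ * Vp = 0 →
        VUᵀ * VU = 1 → VU * VUᵀ * U = U →
        specNorm (Vpᵀ * VU) ≤ c₁ →
        specNorm U ≤ Real.sqrt (2 * specNorm Xs) →
        specNorm (U * Uᵀ - Xs) ≤ c₂ * sigmaMin Xs →
        frobNorm (U * Uᵀ - W * Wᵀ) ≤ c₃ * sigmaMin Xs →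
        0 < μ → μ ≤ c₄ / (specNorm Xs / sigmaMin Xs * specNorm Xs) →
        Matrix.PosSemidef (1 + μ • (Xs - U * Uᵀ - W * Wᵀ)) ∧
          (∀ x : Fin r → ℝ,
            ∑ j, x j * (Vsᵀ * (Xs - U * Uᵀ - W * Wᵀ) * Vs).mulVec x j
              ≤ -(sigmaMin Xs / 2) * ∑ j, x j ^ 2) ∧
          specNorm (1 + μ • (Xs - U * Uᵀ - W * Wᵀ)) ≤ 1 + μ * sigmaMin Xs / 128 := by
  refine ⟨1/256, 1/256, 1/256, 1/4, by norm_num, by norm_num, by norm_num, by norm_num, ?_⟩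
  intro d r hrd Xs hPSD hrk Vs VU U W Vp μ hVs1 hVs2 hVp1 hVsVp hVU1 hVU2 hc1 hUnorm hXU0
    hUW0 hμ0 hμle
  set M : Matrix (Fin d) (Fin d) ℝ := Xs - U * Uᵀ - W * Wᵀ with hM
  set σ := sigmaMin Xs with hσdef
  set N := specNorm Xs with hNdef
  -- Degenerate case: N = 0 contradicts 0 < μ
  by_cases hN0 : N = 0
  · exfalso
    rw [hN0] at hμle
    simp only [zero_div, mul_zero, zero_mul, div_zero] at hμle
    linarith
  have hXne : Xs ≠ 0 := by
    intro h
    apply hN0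
    rw [hNdef, h, specNorm_zero']
  obtain ⟨hσpos, hσleN, hσeig⟩ := sigma_facts' hPSD hXne
  rw [← hσdef, ← hNdef] at hσleN
  rw [← hσdef] at hσpos hσeig
  have hNpos : 0 < N := lt_of_lt_of_le hσpos hσleN
  -- arithmetic consequences of the step-size bound
  have hden : 0 < N / σ * N := by positivity
  have h1 : μ * (N / σ * N) ≤ 1/4 := (le_div_iff₀ hden).mp hμle
  have hμN2 : μ * N ^ 2 ≤ σ / 4 := by
    have h2 : μ * (N / σ * N) * σ ≤ 1/4 * σ := mul_le_mul_of_nonneg_right h1 hσpos.le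
    have hσne : σ ≠ 0 := ne_of_gt hσpos
    have h3 : N / σ * N * σ = N ^ 2 := by
      rw [div_mul_eq_mul_div, div_mul_cancel₀ _ hσne, sq]
    have h4 : μ * (N / σ * N) * σ = μ * N ^ 2 := by rw [mul_assoc, h3]
    linarith [h4 ▸ h2]
  have hμN : μ * N ≤ 1/4 := by nlinarith [hμN2, hσleN, hNpos]
  have hμσ : μ * σ ≤ 1/4 := by nlinarith [hμN, hμ0, hσleN]
  -- spectral norm bounds
  have hXU : specNorm (Xs - U * Uᵀ) ≤ 1/256 * σ := by
    have hns : Xs - U * Uᵀ = -(U * Uᵀ - Xs) := by rw [neg_sub]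
    rw [hns, specNorm_neg']
    exact hXU0
  have hUW : specNorm (U * Uᵀ - W * Wᵀ) ≤ 1/256 * σ :=
    le_trans (specNorm_le_frobNorm' _) hUW0
  -- pointwise quadratic form facts
  have hposU : ∀ y : Fin d → ℝ, 0 ≤ y ⬝ᵥ (U * Uᵀ) *ᵥ y := by
    intro y
    rw [← Matrix.mulVec_mulVec, Matrix.dotProduct_mulVec, ← Matrix.mulVec_transpose]
    exact Finset.sum_nonneg fun i _ => mul_self_nonneg _
  have hdec : ∀ y : Fin d → ℝ, y ⬝ᵥ M *ᵥ y
      = y ⬝ᵥ (Xs - U * Uᵀ) *ᵥ y + y ⬝ᵥ (U * Uᵀ - W * Wᵀ) *ᵥ y - y ⬝ᵥ (U * Uᵀ) *ᵥ y := by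
    intro y
    simp only [hM, Matrix.sub_mulVec, dotProduct_sub]
    ring
  have hdec2 : ∀ y : Fin d → ℝ, y ⬝ᵥ M *ᵥ y
      = -(y ⬝ᵥ Xs *ᵥ y) + 2 * (y ⬝ᵥ (Xs - U * Uᵀ) *ᵥ y) + y ⬝ᵥ (U * Uᵀ - W * Wᵀ) *ᵥ y := by
    intro y
    simp only [hM, Matrix.sub_mulVec, dotProduct_sub]
    ring
  have hq1 : ∀ y : Fin d → ℝ, |y ⬝ᵥ (Xs - U * Uᵀ) *ᵥ y| ≤ 1/256 * σ * ∑ i, y i ^ 2 := by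
    intro y
    refine le_trans (abs_dot_mulVec_le' _ y) ?_
    exact mul_le_mul_of_nonneg_right hXU (Finset.sum_nonneg fun i _ => sq_nonneg _)
  have hq2 : ∀ y : Fin d → ℝ, |y ⬝ᵥ (U * Uᵀ - W * Wᵀ) *ᵥ y| ≤ 1/256 * σ * ∑ i, y i ^ 2 := by
    intro y
    refine le_trans (abs_dot_mulVec_le' _ y) ?_
    exact mul_le_mul_of_nonneg_right hUW (Finset.sum_nonneg fun i _ => sq_nonneg _)
  have hqX : ∀ y : Fin d → ℝ, |y ⬝ᵥ Xs *ᵥ y| ≤ N * ∑ i, y i ^ 2 := fun y =>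
    abs_dot_mulVec_le' Xs y
  -- the quadratic form of 1 + μ M
  have hBform : ∀ y : Fin d → ℝ, y ⬝ᵥ (1 + μ • M) *ᵥ y = (∑ i, y i ^ 2) + μ * (y ⬝ᵥ M *ᵥ y) := by
    intro y
    rw [Matrix.add_mulVec, Matrix.one_mulVec, Matrix.smul_mulVec, dotProduct_add,
      dotProduct_smul, smul_eq_mul]
    congr 1
    simp [dotProduct, sq]
  have hBnn : ∀ y : Fin d → ℝ, 0 ≤ y ⬝ᵥ (1 + μ • M) *ᵥ y := by
    intro y
    rw [hBform y, hdec y]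
    have hS : (0:ℝ) ≤ ∑ i, y i ^ 2 := Finset.sum_nonneg fun i _ => sq_nonneg _
    have ha1 := abs_le.mp (hq1 y)
    have ha2 := abs_le.mp (hq2 y)
    have haX := abs_le.mp (hqX y)
    -- y⬝UUᵀy ≤ y⬝Xs y + |y⬝(Xs-UUᵀ)y|
    have hlin : y ⬝ᵥ (Xs - U * Uᵀ) *ᵥ y = y ⬝ᵥ Xs *ᵥ y - y ⬝ᵥ (U * Uᵀ) *ᵥ y := by
      simp [Matrix.sub_mulVec, dotProduct_sub]
    have hUb : y ⬝ᵥ (U * Uᵀ) *ᵥ y ≤ N * ∑ i, y i ^ 2 + 1/256 * σ * ∑ i, y i ^ 2 := by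
      linarith [ha1.1, haX.2]
    nlinarith [mul_le_mul_of_nonneg_left hUb hμ0.le, hμN, hμσ, hS, hposU y,
      mul_le_mul_of_nonneg_left ha1.1 hμ0.le, mul_le_mul_of_nonneg_left ha2.1 hμ0.le,
      mul_le_mul_of_nonneg_right hμN hS, mul_le_mul_of_nonneg_right hμσ hS]
  -- hermitian-ness
  have hHU : (U * Uᵀ).IsHermitian := by
    have : Uᵀ = Uᴴ := by ext i j; simp
    rw [this]
    exact Matrix.isHermitian_mul_conjTranspose_self U
  have hHW : (W * Wᵀ).IsHermitian := by
    have : Wᵀ = Wᴴ := by ext i j; simp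
    rw [this]
    exact Matrix.isHermitian_mul_conjTranspose_self W
  have hHM : M.IsHermitian := (hPSD.1.sub hHU).sub hHW
  have hMT : Mᵀ = M := transpose_of_herm' hHM
  refine ⟨Matrix.PosSemidef.of_dotProduct_mulVec_nonneg ?_ ?_, ?_, ?_⟩
  · -- IsHermitian of 1 + μ • M
    have hHμM : (μ • M).IsHermitian := by
      show (μ • M)ᴴ = μ • M
      rw [Matrix.conjTranspose_smul, hHM]
      simp
    exact Matrix.isHermitian_one.add hHμM
  · -- nonneg quadratic form
    intro x
    have hst : star x = x := by
      funext i; simp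
    rw [hst]
    exact hBnn x
  · -- statement (ii)
    intro x
    set y : Fin d → ℝ := Vs *ᵥ x with hy
    have hLHS : ∑ j, x j * (Vsᵀ * M * Vs).mulVec x j = y ⬝ᵥ M *ᵥ y := by
      have e1 : ∑ j, x j * (Vsᵀ * M * Vs).mulVec x j = x ⬝ᵥ (Vsᵀ * M * Vs) *ᵥ x := rfl
      rw [e1, ← Matrix.mulVec_mulVec, ← Matrix.mulVec_mulVec, Matrix.dotProduct_mulVec,
        Matrix.vecMul_transpose, hy]
    have hSS : ∑ j, x j ^ 2 = ∑ i, y i ^ 2 := by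
      have e2 : x ⬝ᵥ x = y ⬝ᵥ y := by
        have e3 : x ⬝ᵥ (Vsᵀ * Vs) *ᵥ x = y ⬝ᵥ y := by
          rw [← Matrix.mulVec_mulVec, Matrix.dotProduct_mulVec, Matrix.vecMul_transpose, ← hy]
        rw [← e3, hVs1, Matrix.one_mulVec]
      simpa [dotProduct, sq] using e2
    have hrange : ∃ z, Xs *ᵥ z = y := range_helper' Xs Vs hVs2 hrk x
    have hlow := quad_lower' hPSD hσeig hrange
    have ha1 := abs_le.mp (hq1 y)
    have ha2 := abs_le.mp (hq2 y)
    have hS : (0:ℝ) ≤ ∑ i, y i ^ 2 := Finset.sum_nonneg fun i _ => sq_nonneg _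
    rw [hLHS, hSS, hdec2 y]
    nlinarith [hlow, ha1.2, ha2.2, hS, hσpos]
  · -- statement (iii)
    have hC : (0:ℝ) ≤ 1 + μ * σ / 128 := by nlinarith [hμ0, hσpos]
    apply specNorm_le_of_quad' _ _ hC
    · rw [Matrix.transpose_add, Matrix.transpose_one, Matrix.transpose_smul, hMT]
    · exact hBnn
    · intro y
      rw [hBform y, hdec y]
      have hS : (0:ℝ) ≤ ∑ i, y i ^ 2 := Finset.sum_nonneg fun i _ => sq_nonneg _
      have ha1 := abs_le.mp (hq1 y)
      have ha2 := abs_le.mp (hq2 y)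
      nlinarith [mul_le_mul_of_nonneg_left ha1.2 hμ0.le, mul_le_mul_of_nonneg_left ha2.2 hμ0.le,
        hposU y, hμ0, hS]
end
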